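/- Fix any bijection π : S → {1,…,|S|}. The minimum cardinality of an addition set F ⊆ (S × Q) \ E such that π is a nested ordering of the graph (S ∪ Q, E ∪ F) equals the sum over i = 1,…,|S| of |(⋃_{l ≤ i} N(π⁻¹(l))) \ N(π⁻¹(i))|; moreover this minimum is achieved by adding, for each i, exactly the edges from π⁻¹(i) to the questions in (⋃_{l ≤ i} N(π⁻¹(l))) \ N(π⁻¹(i)). -/

import Mathlib

open Finset

/-- The neighborhood of a student `s` in the bipartite graph with edge set `E`. -/
def nbhd {S Q : Type*} [Fintype Q] [DecidableEq S] [DecidableEq Q]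
    (E : Finset (S × Q)) (s : S) : Finset Q :=
  Finset.univ.filter fun q => (s, q) ∈ E

/-- The questions answered by some student in one of the weakest `i+1` positions
(under `π`) but not by the student in position `i`. -/
def needed {S Q : Type*} [Fintype S] [Fintype Q] [DecidableEq S] [DecidableEq Q]
    (E : Finset (S × Q)) (π : S ≃ Fin (Fintype.card S)) (i : Fin (Fintype.card S)) :
    Finset Q :=
  ((Finset.Iic i).biUnion fun l => nbhd E (π.symm l)) \ nbhd E (π.symm i)

section
variable {S Q : Type*} [Fintype S] [Fintype Q] [DecidableEq S] [DecidableEq Q]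
  (E : Finset (S × Q)) (π : S ≃ Fin (Fintype.card S))

omit [Fintype S] in
lemma mem_nbhd {E : Finset (S × Q)} {s : S} {q : Q} : q ∈ nbhd E s ↔ (s, q) ∈ E := by
  simp [nbhd]

def F0 : Finset (S × Q) :=
  Finset.univ.biUnion fun i : Fin (Fintype.card S) =>
    (needed E π i).image fun q => (π.symm i, q)

lemma mem_F0 {s : S} {q : Q} : (s, q) ∈ F0 E π ↔ q ∈ needed E π (π s) := by
  simp only [F0, mem_biUnion, mem_image, mem_univ, true_and, Prod.mk.injEq]
  constructor
  · rintro ⟨i, q', hq', h1, rfl⟩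
    have : i = π s := by rw [← h1]; simp
    rwa [← this]
  · intro h
    exact ⟨π s, q, h, by simp, rfl⟩

lemma mem_needed {i : Fin (Fintype.card S)} {q : Q} :
    q ∈ needed E π i ↔ (∃ l ≤ i, (π.symm l, q) ∈ E) ∧ (π.symm i, q) ∉ E := by
  simp [needed, mem_nbhd]

lemma nbhd_EF0 (s : S) :
    nbhd (E ∪ F0 E π) s = (Finset.Iic (π s)).biUnion fun l => nbhd E (π.symm l) := by
  ext q
  simp only [mem_nbhd, Finset.mem_union, mem_F0, mem_needed, mem_biUnion, Finset.mem_Iic,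
    mem_nbhd]
  constructor
  · rintro (h | ⟨⟨l, hl, hEl⟩, -⟩)
    · exact ⟨π s, le_refl _, by simpa using h⟩
    · exact ⟨l, hl, hEl⟩
  · rintro ⟨l, hl, hEl⟩
    by_cases h : (s, q) ∈ E
    · exact Or.inl h
    · refine Or.inr ⟨⟨l, hl, hEl⟩, by simpa using h⟩

lemma F0_disjoint : Disjoint (F0 E π) E := by
  rw [Finset.disjoint_left]
  rintro ⟨s, q⟩ h
  rw [mem_F0, mem_needed] at h
  have := h.2
  simpa using this

lemma F0_card : (F0 E π).card = ∑ i : Fin (Fintype.card S), (needed E π i).card := by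
  rw [F0, Finset.card_biUnion]
  · refine Finset.sum_congr rfl fun i _ => ?_
    exact Finset.card_image_of_injective _ (fun a b h => by simpa using h)
  · intro i _ j _ hij
    rw [Function.onFun, Finset.disjoint_left]
    rintro ⟨s, q⟩ h h'
    simp only [mem_image, Prod.mk.injEq] at h h'
    obtain ⟨q1, -, h1, rfl⟩ := h
    obtain ⟨q2, -, h2, -⟩ := h'
    exact hij (π.symm.injective (h1.trans h2.symm))

lemma F0_nested : ∀ s₁ s₂ : S, π s₂ ≤ π s₁ →
    nbhd (E ∪ F0 E π) s₂ ⊆ nbhd (E ∪ F0 E π) s₁ := by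
  intro s₁ s₂ h
  rw [nbhd_EF0, nbhd_EF0]
  exact Finset.biUnion_subset_biUnion_of_subset_left _ (Finset.Iic_subset_Iic.2 h)

lemma F0_min (F : Finset (S × Q))
    (hn : ∀ s₁ s₂ : S, π s₂ ≤ π s₁ → nbhd (E ∪ F) s₂ ⊆ nbhd (E ∪ F) s₁) :
    F0 E π ⊆ F := by
  rintro ⟨s, q⟩ h
  rw [mem_F0, mem_needed] at h
  obtain ⟨⟨l, hl, hEl⟩, hnot⟩ := h
  have h1 : q ∈ nbhd (E ∪ F) (π.symm l) := by
    rw [mem_nbhd]; exact Finset.mem_union_left _ hEl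
  have h2 : q ∈ nbhd (E ∪ F) s := by
    refine hn s (π.symm l) (by simpa using hl) h1
  rw [mem_nbhd, Finset.mem_union] at h2
  rcases h2 with h2 | h2
  · exact absurd h2 (by simpa using hnot)
  · exact h2

end

/-- For a fixed student ordering `π`, the minimum number of edge additions making `π`
nested equals `∑ i, |(⋃_{l ≤ i} N(π⁻¹(l))) \ N(π⁻¹(i))|`; moreover this minimum is achieved
by adding, for each `i`, exactly the edges from `π⁻¹(i)` to the questions in that set. -/
theorem stmt9 {S Q : Type*} [Fintype S] [Fintype Q] [DecidableEq S] [DecidableEq Q]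
    (E : Finset (S × Q)) (π : S ≃ Fin (Fintype.card S)) :
    sInf {c : ℕ | ∃ F : Finset (S × Q), Disjoint F E ∧ F.card = c ∧
        ∀ s₁ s₂ : S, π s₂ ≤ π s₁ → nbhd (E ∪ F) s₂ ⊆ nbhd (E ∪ F) s₁} =
      ∑ i : Fin (Fintype.card S), (needed E π i).card ∧
    (Disjoint (Finset.univ.biUnion fun i : Fin (Fintype.card S) =>
        (needed E π i).image fun q => (π.symm i, q)) E ∧
     (Finset.univ.biUnion fun i : Fin (Fintype.card S) =>
        (needed E π i).image fun q => (π.symm i, q)).card =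
        ∑ i : Fin (Fintype.card S), (needed E π i).card ∧
     ∀ s₁ s₂ : S, π s₂ ≤ π s₁ →
        nbhd (E ∪ Finset.univ.biUnion fun i : Fin (Fintype.card S) =>
          (needed E π i).image fun q => (π.symm i, q)) s₂ ⊆
        nbhd (E ∪ Finset.univ.biUnion fun i : Fin (Fintype.card S) =>
          (needed E π i).image fun q => (π.symm i, q)) s₁) := by
  have hF0 : (Finset.univ.biUnion fun i : Fin (Fintype.card S) =>
      (needed E π i).image fun q => (π.symm i, q)) = F0 E π := rfl
  rw [hF0]
  refine ⟨?_, F0_disjoint E π, F0_card E π, F0_nested E π⟩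
  have hmem : (F0 E π).card ∈ {c : ℕ | ∃ F : Finset (S × Q), Disjoint F E ∧ F.card = c ∧
      ∀ s₁ s₂ : S, π s₂ ≤ π s₁ → nbhd (E ∪ F) s₂ ⊆ nbhd (E ∪ F) s₁} :=
    ⟨F0 E π, F0_disjoint E π, rfl, F0_nested E π⟩
  apply le_antisymm
  · rw [← F0_card E π]
    exact csInf_le (OrderBot.bddBelow _) hmem
  · apply le_csInf ⟨_, hmem⟩
    rintro c ⟨F, -, rfl, hn⟩
    rw [← F0_card E π]
    exact Finset.card_le_card (F0_min E π F hn)
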